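/- Let θ : [0, h₁] → ℝ be a convex function with θ(0) = h₀ and θ(h₁) = 0, where h₀, h₁ > 0. Suppose h_t > 0 satisfies (1−t)·h_t = θ(t·h_t) for some t ∈ (0,1) with t·h_t ∈ [0, h₁]. Then h_t ≤ h₀h₁/(t·h₀ + (1−t)·h₁), and hence h_t ≤ (1−t)h₀ + t·h₁. Moreover, if h_t = (1−t)h₀ + t·h₁, then h₀ = h₁ and θ is affine on [0,h₁]. -/

import Mathlib

theorem stmt13 (h0 h1 : ℝ) (hh0 : 0 < h0) (hh1 : 0 < h1)
    (θ : ℝ → ℝ) (hconv : ConvexOn ℝ (Set.Icc 0 h1) θ)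
    (hθ0 : θ 0 = h0) (hθ1 : θ h1 = 0)
    (t ht_ : ℝ) (ht : t ∈ Set.Ioo (0 : ℝ) 1) (hpos : 0 < ht_)
    (hmem : t * ht_ ∈ Set.Icc 0 h1)
    (heq : (1 - t) * ht_ = θ (t * ht_)) :
    ht_ ≤ h0 * h1 / (t * h0 + (1 - t) * h1) ∧
    ht_ ≤ (1 - t) * h0 + t * h1 ∧
    (ht_ = (1 - t) * h0 + t * h1 →
      h0 = h1 ∧ ∀ x ∈ Set.Icc (0 : ℝ) h1, θ x = h0 - (h0 / h1) * x) := by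
  obtain ⟨ht0, ht1⟩ := ht
  have h0mem : (0:ℝ) ∈ Set.Icc (0:ℝ) h1 := ⟨le_refl _, hh1.le⟩
  have h1mem : h1 ∈ Set.Icc (0:ℝ) h1 := ⟨hh1.le, le_refl _⟩
  have chord : ∀ x ∈ Set.Icc (0:ℝ) h1, θ x ≤ h0 - (h0/h1)*x := by
    intro x hx
    have ha : (0:ℝ) ≤ 1 - x/h1 := by
      have : x/h1 ≤ 1 := (div_le_one hh1).mpr hx.2
      linarith
    have hb : (0:ℝ) ≤ x/h1 := div_nonneg hx.1 hh1.le
    have hab : (1 - x/h1) + x/h1 = 1 := by ring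
    have := hconv.2 h0mem h1mem ha hb hab
    have hx' : (1 - x/h1) • (0:ℝ) + (x/h1) • h1 = x := by
      field_simp
      simp [hh1.ne']
    rw [hx'] at this
    rw [hθ0, hθ1] at this
    calc θ x ≤ (1 - x/h1) * h0 + (x/h1) * 0 := this
      _ = h0 - (h0/h1)*x := by field_simp; ring
  have hD : 0 < t * h0 + (1 - t) * h1 := by nlinarith
  have hb1 : ht_ * (t * h0 + (1 - t) * h1) ≤ h0 * h1 := by
    have hc := chord (t * ht_) hmem
    rw [← heq] at hc
    have : (1 - t) * ht_ * h1 ≤ (h0 - h0/h1 * (t * ht_)) * h1 := by nlinarith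
    have hd : h0/h1 * (t * ht_) * h1 = h0 * t * ht_ := by field_simp
    nlinarith [this]
  have p1 : ht_ ≤ h0 * h1 / (t * h0 + (1 - t) * h1) := (le_div_iff₀ hD).mpr hb1
  have p2 : ht_ ≤ (1 - t) * h0 + t * h1 := by
    refine p1.trans ?_
    rw [div_le_iff₀ hD]
    nlinarith [sq_nonneg (h0 - h1), mul_pos ht0 (by linarith : (0:ℝ) < 1 - t)]
  refine ⟨p1, p2, fun heqM => ?_⟩
  have h01 : h0 = h1 := by
    have : ((1 - t) * h0 + t * h1) * (t * h0 + (1 - t) * h1) ≤ h0 * h1 := by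
      rw [← heqM]; exact hb1
    have h1t : (0:ℝ) < 1 - t := by linarith
    have hsq : (h0 - h1)^2 ≤ 0 := by nlinarith [mul_pos ht0 h1t]
    have : (h0 - h1)^2 = 0 := le_antisymm hsq (sq_nonneg _)
    have := sq_eq_zero_iff.mp this
    linarith
  refine ⟨h01, ?_⟩
  have hht : ht_ = h0 := by rw [heqM, ← h01]; ring
  set s := t * ht_ with hs
  have hs0 : 0 < s := mul_pos ht0 hpos
  have hs1 : s < h1 := by rw [hs, hht, h01]; nlinarith
  have hθs : θ s = h0 - (h0/h1)*s := by
    rw [← heq, hs, hht, ← h01]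
    field_simp
  intro x hx
  refine le_antisymm (chord x hx) ?_
  rcases lt_trichotomy x s with hlt | heqx | hgt
  · -- s between x and h1 : s = (1-μ)x + μ h1, μ = (s-x)/(h1-x)
    have hden : 0 < h1 - x := by linarith
    set μ := (s - x)/(h1 - x) with hμ
    have hμ0 : 0 < μ := div_pos (by linarith) hden
    have hμ1 : μ < 1 := by rw [hμ, div_lt_one hden]; linarith
    have hcomb : (1 - μ) • x + μ • h1 = s := by
      simp only [smul_eq_mul, hμ]; field_simp; ring
    have := hconv.2 hx h1mem (show (0:ℝ) ≤ 1 - μ by linarith)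
      (show (0:ℝ) ≤ μ by linarith) (show (1 - μ) + μ = 1 by ring)
    rw [hcomb, hθ1, hθs] at this
    have hL : h0 - (h0/h1)*s = (1 - μ) * (h0 - (h0/h1)*x) := by
      rw [hμ]; field_simp; ring
    rw [hL] at this
    simp only [smul_eq_mul] at this
    have h1μ : 0 < 1 - μ := by linarith
    nlinarith [this, h1μ]
  · rw [heqx, hθs]
  · -- s between 0 and x : s = μ x, μ = s/x
    have hxpos : 0 < x := lt_trans hs0 hgt
    set μ := s/x with hμ
    have hμ0 : 0 < μ := div_pos hs0 hxpos
    have hμ1 : μ < 1 := by rw [hμ, div_lt_one hxpos]; linarith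
    have hcomb : (1 - μ) • (0:ℝ) + μ • x = s := by
      simp only [smul_eq_mul, hμ]; field_simp; ring
    have := hconv.2 h0mem hx (show (0:ℝ) ≤ 1 - μ by linarith)
      (show (0:ℝ) ≤ μ by linarith) (show (1 - μ) + μ = 1 by ring)
    rw [hcomb, hθ0, hθs] at this
    have hL : h0 - (h0/h1)*s = (1 - μ) * h0 + μ * (h0 - (h0/h1)*x) := by
      rw [hμ]; field_simp; ring
    rw [hL] at this
    simp only [smul_eq_mul] at this
    nlinarith [this, hμ0]
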